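/- arXiv:2504.17652 — 2 statements merged into one kernel-verified Lean document; each statement's English description precedes it below -/
import Mathlib

section
/- For τ ∈ ℂ with τ not of the form 2πik/β for k ∈ ℤ, the function R_τ(φ, φ') = -cosh(τ(|φ - φ'| - β/2)) / (2τ sinh(βτ/2)) on (ℝ/βℤ)² is the integral kernel of the inverse of the operator d²/dφ² - τ² on L²(ℝ/βℤ): that is, for every f ∈ L²(ℝ/βℤ), the function u(φ) = ∫₀^β R_τ(φ, φ') f(φ') dφ' satisfies u'' - τ²u = f. -/
open scoped Real
open Complex intervalIntegral

private lemma auxFTC (g : ℝ → ℂ) (hg : Continuous g) (a x : ℝ) :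
    HasDerivAt (fun y => ∫ t in a..y, g t) (g x) x :=
  intervalIntegral.integral_hasDerivAt_right (hg.intervalIntegrable a x)
    ⟨Set.univ, Filter.univ_mem, hg.aestronglyMeasurable.restrict⟩ hg.continuousAt

private lemma auxLin (τ c : ℂ) (x : ℝ) :
    HasDerivAt (fun y : ℝ => τ * ((y : ℂ) + c)) τ x := by
  have h : HasDerivAt (fun z : ℂ => τ * (z + c)) τ (x : ℂ) := by
    simpa using ((hasDerivAt_id (x : ℂ)).add_const c).const_mul τ
  exact h.comp_ofReal

private lemma auxCosh (τ c : ℂ) (x : ℝ) :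
    HasDerivAt (fun y : ℝ => Complex.cosh (τ * ((y : ℂ) + c)))
      (τ * Complex.sinh (τ * ((x : ℂ) + c))) x := by
  have h0 : HasDerivAt (fun z : ℂ => τ * (z + c)) τ (x : ℂ) := by
    simpa using ((hasDerivAt_id (x : ℂ)).add_const c).const_mul τ
  simpa [mul_comm] using h0.ccosh.comp_ofReal

private lemma auxSinh (τ c : ℂ) (x : ℝ) :
    HasDerivAt (fun y : ℝ => Complex.sinh (τ * ((y : ℂ) + c)))
      (τ * Complex.cosh (τ * ((x : ℂ) + c))) x := by
  have h0 : HasDerivAt (fun z : ℂ => τ * (z + c)) τ (x : ℂ) := by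
    simpa using ((hasDerivAt_id (x : ℂ)).add_const c).const_mul τ
  simpa [mul_comm] using h0.csinh.comp_ofReal

private lemma fract_cosh_eq (β : ℝ) (hβ : 0 < β) (τ : ℂ) {s : ℝ} (h0 : 0 ≤ s) (h1 : s ≤ β) :
    Complex.cosh (τ * ((β * Int.fract (s / β) - β / 2 : ℝ) : ℂ)) =
      Complex.cosh (τ * ((s : ℂ) - (β : ℂ) / 2)) := by
  rcases eq_or_lt_of_le h1 with rfl | h1
  · rw [div_self hβ.ne', Int.fract_one,
      show ((s * (0 : ℝ) - s / 2 : ℝ) : ℂ) = -((s : ℂ) - (s : ℂ) / 2) by push_cast; ring,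
      mul_neg, Complex.cosh_neg]
  · rw [Int.fract_eq_self.mpr ⟨div_nonneg h0 hβ.le, (div_lt_one hβ).mpr h1⟩,
      mul_div_cancel₀ _ hβ.ne']
    norm_cast

private lemma fract_cosh_eq' (β : ℝ) (hβ : 0 < β) (τ : ℂ) {s : ℝ} (h0 : -β ≤ s) (h1 : s ≤ 0) :
    Complex.cosh (τ * ((β * Int.fract (s / β) - β / 2 : ℝ) : ℂ)) =
      Complex.cosh (τ * ((s : ℂ) + (β : ℂ) / 2)) := by
  have hf : Int.fract (s / β) = Int.fract ((s + β) / β) := by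
    rw [add_div, div_self hβ.ne', Int.fract_add_one]
  rw [hf, fract_cosh_eq β hβ τ (by linarith) (by linarith)]
  congr 1
  push_cast; ring

/-- The function `R_τ(φ,φ') = -cosh(τ(|φ-φ'| - β/2))/(2τ sinh(βτ/2))` (with `|φ-φ'|` the
representative `β·fract((φ-φ')/β) ∈ [0,β)` of `φ-φ'` on the circle `ℝ/βℤ`) is, for `τ` not of
the form `2πik/β`, the continuous integral kernel of the inverse of `d²/dφ² - τ²` on the circle
of circumference `β`: for continuous `β`-periodic `f`, the function
`u(φ) = ∫₀^β R_τ(φ,φ') f(φ') dφ'` satisfies `u'' - τ²u = f`. -/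
theorem circle_resolvent_kernel (β : ℝ) (hβ : 0 < β) (τ : ℂ)
    (hτ : ∀ k : ℤ, τ ≠ 2 * π * Complex.I * k / β)
    (f : ℝ → ℂ) (hf : Continuous f) (hper : ∀ φ : ℝ, f (φ + β) = f φ)
    (R : ℝ → ℝ → ℂ)
    (hR : ∀ φ φ' : ℝ, R φ φ' =
      -Complex.cosh (τ * ((β * Int.fract ((φ - φ') / β) - β / 2 : ℝ) : ℂ)) /
        (2 * τ * Complex.sinh ((β : ℂ) * τ / 2)))
    (u : ℝ → ℂ) (hu : ∀ φ : ℝ, u φ = ∫ φ' in (0:ℝ)..β, R φ φ' * f φ') :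
    Continuous (fun p : ℝ × ℝ => R p.1 p.2) ∧
      ∀ φ : ℝ, deriv (deriv u) φ - τ ^ 2 * u φ = f φ := by
  have hτ0 : τ ≠ 0 := by
    intro h
    exact hτ 0 (by simp [h])
  have hβ0 : (β : ℂ) ≠ 0 := by exact_mod_cast hβ.ne'
  have hsinh : Complex.sinh ((β : ℂ) * τ / 2) ≠ 0 := by
    intro h
    have h2 : Complex.sin ((β : ℂ) * τ / 2 * Complex.I) = 0 := by
      rw [Complex.sin_mul_I, h, zero_mul]
    obtain ⟨k, hk⟩ := Complex.sin_eq_zero_iff.mp h2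
    apply hτ (-k)
    push_cast
    field_simp
    linear_combination (-2 * Complex.I) * hk + τ * (β : ℂ) * Complex.I_sq
  -- continuity
  have hgc : Continuous fun t : ℝ => Complex.cosh (τ * ((β * t - β / 2 : ℝ) : ℂ)) := by
    fun_prop
  have hg01 : (fun t : ℝ => Complex.cosh (τ * ((β * t - β / 2 : ℝ) : ℂ))) 0 =
      (fun t : ℝ => Complex.cosh (τ * ((β * t - β / 2 : ℝ) : ℂ))) 1 := by
    simp only
    rw [show ((β * (0:ℝ) - β / 2 : ℝ) : ℂ) = -((β * (1:ℝ) - β / 2 : ℝ) : ℂ) by push_cast; ring,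
      mul_neg, Complex.cosh_neg]
  have hgf := ContinuousOn.comp_fract'' hgc.continuousOn hg01
  have Hcont : Continuous (fun p : ℝ × ℝ => R p.1 p.2) := by
    have : (fun p : ℝ × ℝ => R p.1 p.2) = fun p : ℝ × ℝ =>
        -((fun t : ℝ => Complex.cosh (τ * ((β * t - β / 2 : ℝ) : ℂ))) ∘ Int.fract)
            ((p.1 - p.2) / β) / (2 * τ * Complex.sinh ((β : ℂ) * τ / 2)) := by
      funext p; rw [hR]; rfl
    rw [this]
    exact ((hgf.comp ((continuous_fst.sub continuous_snd).div_const β)).neg).div_const _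
  refine ⟨Hcont, fun p => ?_⟩
  set D : ℂ := 2 * τ * Complex.sinh ((β : ℂ) * τ / 2) with hD
  have hDne : D ≠ 0 := mul_ne_zero (mul_ne_zero two_ne_zero hτ0) hsinh
  set a : ℝ := p - β / 2 with ha
  set b : ℝ := p + β / 2 with hb
  have hab : a + β = b := by rw [ha, hb]; ring
  have hRc : ∀ φ : ℝ, Continuous fun φ' => R φ φ' * f φ' := fun φ =>
    (Hcont.comp (continuous_const.prodMk continuous_id)).mul hf
  -- the integrand is β-periodic in φ'
  have hperR : ∀ φ : ℝ, Function.Periodic (fun φ' => R φ φ' * f φ') β := by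
    intro φ φ'
    simp only
    rw [hR, hR, hper]
    congr 3
    rw [show (φ - (φ' + β)) / β = (φ - φ') / β - 1 by field_simp; ring, Int.fract_sub_one]
  have hu2 : ∀ φ : ℝ, u φ = ∫ φ' in a..b, R φ φ' * f φ' := by
    intro φ
    rw [hu φ, ← hab]
    simpa using (hperR φ).intervalIntegral_add_eq 0 a
  set c₁ : ℂ := -((β : ℂ) / 2) with hc₁
  set c₂ : ℂ := (β : ℂ) / 2 with hc₂
  have ccont : Continuous fun t : ℝ => Complex.cosh (τ * (t : ℂ)) * f t := by fun_prop
  have scont : Continuous fun t : ℝ => Complex.sinh (τ * (t : ℂ)) * f t := by fun_prop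
  set C : ℝ → ℂ := fun x => ∫ t in a..x, Complex.cosh (τ * (t : ℂ)) * f t with hCdef
  set S : ℝ → ℂ := fun x => ∫ t in a..x, Complex.sinh (τ * (t : ℂ)) * f t with hSdef
  have hC' : ∀ x : ℝ, HasDerivAt C (Complex.cosh (τ * (x : ℂ)) * f x) x := fun x =>
    auxFTC _ ccont a x
  have hS' : ∀ x : ℝ, HasDerivAt S (Complex.sinh (τ * (x : ℂ)) * f x) x := fun x =>
    auxFTC _ scont a x
  set v : ℝ → ℂ := fun x =>
    -(1 / D) * (Complex.cosh (τ * ((x : ℂ) + c₁)) * C x - Complex.sinh (τ * ((x : ℂ) + c₁)) * S x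
      + Complex.cosh (τ * ((x : ℂ) + c₂)) * (C b - C x)
      - Complex.sinh (τ * ((x : ℂ) + c₂)) * (S b - S x)) with hvdef
  -- u agrees with v on [a, b]
  have hveq : ∀ φ ∈ Set.Icc a b, u φ = v φ := by
    intro φ hφ
    obtain ⟨haφ, hφb⟩ := hφ
    rw [hu2 φ, ← intervalIntegral.integral_add_adjacent_intervals
      ((hRc φ).intervalIntegrable a φ) ((hRc φ).intervalIntegrable φ b)]
    have e1 : (∫ φ' in a..φ, R φ φ' * f φ') =
        ∫ φ' in a..φ, (-(1 / D) * Complex.cosh (τ * ((φ : ℂ) + c₁))) *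
            (Complex.cosh (τ * (φ' : ℂ)) * f φ') +
          ((1 / D) * Complex.sinh (τ * ((φ : ℂ) + c₁))) *
            (Complex.sinh (τ * (φ' : ℂ)) * f φ') := by
      apply intervalIntegral.integral_congr
      intro φ' hφ'
      rw [Set.uIcc_of_le haφ] at hφ'
      obtain ⟨h1, h2⟩ := hφ'
      show R φ φ' * f φ' = _
      rw [hR, fract_cosh_eq β hβ τ (by linarith) (by linarith),
        show τ * (((φ - φ' : ℝ) : ℂ) - (β : ℂ) / 2) =
          τ * ((φ : ℂ) + c₁) - τ * (φ' : ℂ) by rw [hc₁, hc₂]; push_cast; ring,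
        Complex.cosh_sub]
      ring
    have e2 : (∫ φ' in φ..b, R φ φ' * f φ') =
        ∫ φ' in φ..b, (-(1 / D) * Complex.cosh (τ * ((φ : ℂ) + c₂))) *
            (Complex.cosh (τ * (φ' : ℂ)) * f φ') +
          ((1 / D) * Complex.sinh (τ * ((φ : ℂ) + c₂))) *
            (Complex.sinh (τ * (φ' : ℂ)) * f φ') := by
      apply intervalIntegral.integral_congr
      intro φ' hφ'
      rw [Set.uIcc_of_le hφb] at hφ'
      obtain ⟨h1, h2⟩ := hφ'
      show R φ φ' * f φ' = _
      rw [hR, fract_cosh_eq' β hβ τ (by linarith) (by linarith),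
        show τ * (((φ - φ' : ℝ) : ℂ) + (β : ℂ) / 2) =
          τ * ((φ : ℂ) + c₂) - τ * (φ' : ℂ) by rw [hc₂]; push_cast; ring,
        Complex.cosh_sub]
      ring
    rw [e1, e2,
      intervalIntegral.integral_add ((ccont.intervalIntegrable a φ).const_mul _)
        ((scont.intervalIntegrable a φ).const_mul _),
      intervalIntegral.integral_add ((ccont.intervalIntegrable φ b).const_mul _)
        ((scont.intervalIntegrable φ b).const_mul _),
      intervalIntegral.integral_const_mul, intervalIntegral.integral_const_mul,
      intervalIntegral.integral_const_mul, intervalIntegral.integral_const_mul]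
    have eC : (∫ t in φ..b, Complex.cosh (τ * (t : ℂ)) * f t) = C b - C φ :=
      (intervalIntegral.integral_interval_sub_left (ccont.intervalIntegrable a b)
        (ccont.intervalIntegrable a φ)).symm
    have eS : (∫ t in φ..b, Complex.sinh (τ * (t : ℂ)) * f t) = S b - S φ :=
      (intervalIntegral.integral_interval_sub_left (scont.intervalIntegrable a b)
        (scont.intervalIntegrable a φ)).symm
    rw [eC, eS]
    simp only [hvdef]
    ring
  -- first derivative of v
  set w : ℝ → ℂ := fun x =>
    -(1 / D) * (τ * Complex.sinh (τ * ((x : ℂ) + c₁)) * C x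
      - τ * Complex.cosh (τ * ((x : ℂ) + c₁)) * S x
      + τ * Complex.sinh (τ * ((x : ℂ) + c₂)) * (C b - C x)
      - τ * Complex.cosh (τ * ((x : ℂ) + c₂)) * (S b - S x)) with hwdef
  have hv' : ∀ x : ℝ, HasDerivAt v (w x) x := by
    intro x
    simp only [hvdef, hwdef]
    have H := (((((auxCosh τ c₁ x).mul (hC' x)).sub ((auxSinh τ c₁ x).mul (hS' x))).add
        ((auxCosh τ c₂ x).mul ((hasDerivAt_const x (C b)).sub (hC' x)))).sub
          ((auxSinh τ c₂ x).mul ((hasDerivAt_const x (S b)).sub (hS' x)))).const_mul (-(1 / D))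
    refine H.congr_deriv (Eq.symm ?_)
    have E1 : Complex.cosh (τ * ((x : ℂ) + c₁)) * Complex.cosh (τ * (x : ℂ)) -
        Complex.sinh (τ * ((x : ℂ) + c₁)) * Complex.sinh (τ * (x : ℂ)) =
        Complex.cosh (τ * ((β : ℂ) / 2)) := by
      rw [← Complex.cosh_sub,
        show τ * ((x : ℂ) + c₁) - τ * (x : ℂ) = -(τ * ((β : ℂ) / 2)) by rw [hc₁, hc₂]; ring,
        Complex.cosh_neg]
    have E2 : Complex.cosh (τ * ((x : ℂ) + c₂)) * Complex.cosh (τ * (x : ℂ)) -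
        Complex.sinh (τ * ((x : ℂ) + c₂)) * Complex.sinh (τ * (x : ℂ)) =
        Complex.cosh (τ * ((β : ℂ) / 2)) := by
      rw [← Complex.cosh_sub,
        show τ * ((x : ℂ) + c₂) - τ * (x : ℂ) = τ * ((β : ℂ) / 2) by rw [hc₂]; ring]
    simp only [Pi.sub_apply]
    linear_combination (f x / D) * E1 - (f x / D) * E2
  -- second derivative at p
  have hw' : HasDerivAt w (τ ^ 2 * v p + f p) p := by
    simp only [hwdef, hvdef]
    have A1 := (((auxSinh τ c₁ p).const_mul τ).mul (hC' p)).sub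
      (((auxCosh τ c₁ p).const_mul τ).mul (hS' p))
    have A2 := A1.add (((auxSinh τ c₂ p).const_mul τ).mul ((hasDerivAt_const p (C b)).sub (hC' p)))
    have A3 := A2.sub (((auxCosh τ c₂ p).const_mul τ).mul ((hasDerivAt_const p (S b)).sub (hS' p)))
    have H := A3.const_mul (-(1 / D))
    refine H.congr_deriv (Eq.symm ?_)
    have F1 : Complex.sinh (τ * ((p : ℂ) + c₁)) * Complex.cosh (τ * (p : ℂ)) -
        Complex.cosh (τ * ((p : ℂ) + c₁)) * Complex.sinh (τ * (p : ℂ)) =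
        -Complex.sinh (τ * ((β : ℂ) / 2)) := by
      rw [← Complex.sinh_sub,
        show τ * ((p : ℂ) + c₁) - τ * (p : ℂ) = -(τ * ((β : ℂ) / 2)) by rw [hc₁, hc₂]; ring,
        Complex.sinh_neg]
    have F2 : Complex.sinh (τ * ((p : ℂ) + c₂)) * Complex.cosh (τ * (p : ℂ)) -
        Complex.cosh (τ * ((p : ℂ) + c₂)) * Complex.sinh (τ * (p : ℂ)) =
        Complex.sinh (τ * ((β : ℂ) / 2)) := by
      rw [← Complex.sinh_sub,
        show τ * ((p : ℂ) + c₂) - τ * (p : ℂ) = τ * ((β : ℂ) / 2) by rw [hc₂]; ring]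
    have hDd : D = 2 * τ * Complex.sinh (τ * ((β : ℂ) / 2)) := by rw [hD]; ring_nf
    simp only [Pi.sub_apply]
    field_simp
    linear_combination (τ * f p) * F1 - (τ * f p) * F2 + f p * hDd
  have hmem : p ∈ Set.Ioo a b := ⟨by rw [ha]; linarith, by rw [hb]; linarith⟩
  have hd1 : Set.EqOn (deriv u) (deriv v) (Set.Ioo a b) := by
    intro x hx
    exact Filter.EventuallyEq.deriv_eq (Filter.eventuallyEq_of_mem
      (isOpen_Ioo.mem_nhds hx) fun y hy => hveq y (Set.Ioo_subset_Icc_self hy))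
  have hd2 : deriv (deriv u) p = deriv (deriv v) p :=
    Filter.EventuallyEq.deriv_eq (Filter.eventuallyEq_of_mem
      (isOpen_Ioo.mem_nhds hmem) hd1)
  have hdv : deriv v = w := funext fun x => (hv' x).deriv
  rw [hd2, hdv, hw'.deriv, hveq p (Set.Ioo_subset_Icc_self hmem)]
  ring
end

section
/- Suppose the heat trace K(τ) = ∑_k e^{-λ_k τ} of a nonnegative operator with discrete spectrum satisfies K(τ) = A/(4πτ) + c₀ + O(e^{-b/τ}) as τ → 0⁺ for constants A, c₀, b > 0. Then for μ < 0, the function ζ_{Δ-μ}(s) = (1/Γ(s)) ∫₀^∞ e^{μτ} τ^{s-1} K(τ) dτ satisfies ζ_{Δ-μ}(s) - [A Γ(s-1)/(4π Γ(s) (-μ)^{s-1}) + c₀/(-μ)^s] = O(|μ|^{-N}) as μ → -∞ for every N, uniformly for s in compact subsets of ℂ where the left side is defined. -/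
open scoped Real
open Complex MeasureTheory Set

private lemma myPowLeExp (x : ℝ) (hx : 0 ≤ x) (n : ℕ) :
    x ^ n ≤ (Nat.factorial n : ℝ) * Real.exp x := by
  have h := Real.sum_le_exp_of_nonneg hx (n+1)
  have h2 : x ^ n / (Nat.factorial n : ℝ) ≤ ∑ i ∈ Finset.range (n+1), x ^ i / (Nat.factorial i : ℝ) :=
    Finset.single_le_sum (f := fun i => x ^ i / (Nat.factorial i : ℝ)) (fun i _ => by positivity)
      (Finset.self_mem_range_succ n)
  have hn : (0:ℝ) < (Nat.factorial n : ℝ) := by positivity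
  rw [div_le_iff₀ hn] at h2
  nlinarith [h2, h, Real.exp_pos x]

private lemma myExpNegLe (y : ℝ) (hy : 0 ≤ y) (n : ℕ) : y ^ n * Real.exp (-y) ≤ ((Nat.factorial n : ℕ) : ℝ) := by
  have h := myPowLeExp y hy n
  have := Real.exp_pos y
  calc y ^ n * Real.exp (-y) ≤ (((Nat.factorial n : ℕ) : ℝ) * Real.exp y) * Real.exp (-y) := by
        apply mul_le_mul_of_nonneg_right h (Real.exp_pos _).le
    _ = ((Nat.factorial n : ℕ) : ℝ) := by rw [mul_assoc, ← Real.exp_add]; simp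

private lemma myAMGM {x y : ℝ} (hx : 0 ≤ x) (hy : 0 ≤ y) : 2 * Real.sqrt (x*y) ≤ x + y := by
  nlinarith [sq_nonneg (Real.sqrt x - Real.sqrt y), Real.sq_sqrt hx, Real.sq_sqrt hy,
    Real.sqrt_nonneg x, Real.sqrt_nonneg y, Real.sqrt_mul hx y]

private lemma myIntOn {s : ℂ} (hs : 0 < s.re) {μ : ℝ} (hμ : μ < 0) :
    IntegrableOn (fun τ:ℝ => Complex.exp ((μ*τ : ℝ):ℂ) * (τ:ℂ)^(s-1)) (Set.Ioi 0) := by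
  have hr : (0:ℝ) < -μ := by linarith
  have hint : IntegrableOn (fun x : ℝ => x ^ (s.re - 1) * Real.exp (-(-μ) * x)) (Ioi 0) := by
    have := integrableOn_rpow_mul_exp_neg_mul_rpow (p := 1) (s := s.re - 1) (b := -μ)
      (by linarith) one_pos hr
    refine this.congr_fun (fun x hx => ?_) measurableSet_Ioi
    simp [Real.rpow_one]
  refine hint.mono' ?_ ?_
  · refine (ContinuousOn.mul ?_ ?_).aestronglyMeasurable measurableSet_Ioi
    · exact (Complex.continuous_exp.comp
        (Complex.continuous_ofReal.comp (continuous_const.mul continuous_id))).continuousOn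
    · exact ContinuousOn.cpow_const Complex.continuous_ofReal.continuousOn
        (fun a ha => by simpa using (mem_Ioi.mp ha))
  · filter_upwards [ae_restrict_mem measurableSet_Ioi] with τ hτ
    rw [mem_Ioi] at hτ
    rw [norm_mul, Complex.norm_exp,
      Complex.norm_cpow_eq_rpow_re_of_pos hτ]
    simp only [Complex.ofReal_re, Complex.sub_re, Complex.one_re]
    rw [show - -μ * τ = μ * τ by ring]
    exact le_of_eq (mul_comm _ _)

private lemma myIntVal {s : ℂ} (hs : 0 < s.re) {μ : ℝ} (hμ : μ < 0) :
    ∫ τ in Set.Ioi (0:ℝ), Complex.exp ((μ*τ : ℝ):ℂ) * (τ:ℂ)^(s-1)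
      = (1/((-μ : ℝ):ℂ))^s * Complex.Gamma s := by
  have hr : (0:ℝ) < -μ := by linarith
  rw [← Complex.integral_cpow_mul_exp_neg_mul_Ioi hs hr]
  refine setIntegral_congr_fun measurableSet_Ioi (fun τ hτ => ?_)
  rw [mul_comm]
  congr 1
  push_cast
  ring_nf
set_option maxHeartbeats 2000000 in
/-- If the heat trace `K(τ) = ∑ₖ e^{-λ_k τ}` satisfies `K(τ) = A/(4πτ) + c₀ + O(e^{-b/τ})` as
`τ → 0⁺`, then `ζ_{Δ-μ}(s) = Γ(s)⁻¹ ∫₀^∞ e^{μτ} τ^{s-1} K(τ) dτ` differs from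
`A Γ(s-1)/(4π Γ(s) (-μ)^{s-1}) + c₀ (-μ)^{-s}` by `O(|μ|^{-N})` for every `N` as `μ → -∞`,
uniformly for `s` in compact subsets of `{Re s > 1}`. -/
theorem heat_trace_resolvent_zeta_asymptotics (lam : ℕ → ℝ) (hpos : ∀ k, 0 < lam k)
    (hsum : ∀ τ : ℝ, 0 < τ → Summable fun k => Real.exp (-lam k * τ))
    (A c₀ b : ℝ) (hb : 0 < b) (CK : ℝ)
    (hK : ∀ τ : ℝ, 0 < τ → τ ≤ 1 →
      |(∑' k, Real.exp (-lam k * τ)) - A / (4 * π * τ) - c₀| ≤ CK * Real.exp (-b / τ)) :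
    ∀ (N : ℕ) (S : Set ℂ), IsCompact S → S ⊆ {s : ℂ | 1 < s.re} →
      ∃ C μ₀ : ℝ, μ₀ < 0 ∧ ∀ μ : ℝ, μ ≤ μ₀ → ∀ s ∈ S,
        ‖(Complex.Gamma s)⁻¹ *
            (∫ τ in Set.Ioi (0 : ℝ), Complex.exp ((μ * τ : ℝ) : ℂ) * (τ : ℂ) ^ (s - 1) *
              ((∑' k, Real.exp (-lam k * τ) : ℝ) : ℂ)) -
          ((A : ℂ) * Complex.Gamma (s - 1) /
              (4 * (π : ℂ) * Complex.Gamma s * ((-μ : ℝ) : ℂ) ^ (s - 1)) +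
            (c₀ : ℂ) * ((-μ : ℝ) : ℂ) ^ (-s))‖ ≤ C * |μ| ^ (-(N : ℝ)) := by
  intro N S hScompact hSsub
  set K : ℝ → ℝ := fun τ => ∑' k, Real.exp (-lam k * τ) with hKdef
  have hπ : (0:ℝ) < π := Real.pi_pos
  have hKnonneg : ∀ τ : ℝ, 0 ≤ K τ := fun τ => tsum_nonneg (fun k => (Real.exp_pos _).le)
  have hKanti : ∀ τ₁ τ₂ : ℝ, 0 < τ₁ → τ₁ ≤ τ₂ → K τ₂ ≤ K τ₁ := by
    intro τ₁ τ₂ h1 h12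
    refine Summable.tsum_le_tsum (fun k => ?_) (hsum τ₂ (lt_of_lt_of_le h1 h12)) (hsum τ₁ h1)
    apply Real.exp_le_exp.2
    nlinarith [(hpos k).le]
  have hCK : 0 ≤ CK := by
    have h := hK 1 one_pos le_rfl
    nlinarith [abs_nonneg ((K 1) - A / (4*π*1) - c₀), Real.exp_pos (-b/1)]
  obtain ⟨R, hR⟩ := hScompact.exists_bound_of_continuousOn continuousOn_id
  set R₀ : ℝ := max R 0 with hR₀def
  have hR₀ : 0 ≤ R₀ := le_max_right _ _
  have hsR : ∀ s ∈ S, s.re ≤ R₀ := fun s hs =>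
    le_trans (le_trans (Complex.re_le_norm s) (hR s hs)) (le_max_left _ _)
  obtain ⟨G, hG⟩ := hScompact.exists_bound_of_continuousOn
    (Complex.differentiable_one_div_Gamma.continuous.continuousOn)
  set G₀ : ℝ := max G 0 with hG₀def
  have hG₀ : 0 ≤ G₀ := le_max_right _ _
  have hGb : ∀ s ∈ S, ‖(Complex.Gamma s)⁻¹‖ ≤ G₀ := fun s hs => (hG s hs).trans (le_max_left _ _)
  set M : ℝ := K 1 + |A|/(4*π) + |c₀| with hMdef
  have hM : 0 ≤ M := add_nonneg (add_nonneg (hKnonneg 1) (by positivity)) (abs_nonneg _)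
  set D : ℝ := CK * ((Nat.factorial (2*N) : ℝ) / (2*b)^N)
      + M * Real.exp R₀ * ((Nat.factorial N : ℝ) * 2^N) with hDdef
  have hD : 0 ≤ D := by positivity
  refine ⟨2 * G₀ * D, -(2*R₀+2), by linarith, ?_⟩
  intro μ hμ s hsS
  have hs1 : 1 < s.re := hSsub hsS
  have hμ0 : μ < 0 := by linarith
  have hr0 : (0:ℝ) < -μ := by linarith
  have hr2 : (2:ℝ) ≤ -μ := by linarith
  have hμR : μ/2 + R₀ ≤ -1 := by linarith
  set Rf : ℝ → ℂ := fun τ => Complex.exp ((μ*τ : ℝ):ℂ) * (τ:ℂ)^(s-1) *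
      ((K τ - A/(4*π*τ) - c₀ : ℝ):ℂ) with hRfdef
  set E : ℝ := CK * Real.exp (-(2 * Real.sqrt (b*(-μ)/2))) + M * Real.exp (μ/2 + R₀) with hEdef
  have hE0 : 0 ≤ E := add_nonneg (mul_nonneg hCK (Real.exp_pos _).le)
    (mul_nonneg hM (Real.exp_pos _).le)
  -- norm formula
  have hnorm : ∀ τ : ℝ, 0 < τ → ∀ x : ℝ,
      ‖Complex.exp ((μ*τ : ℝ):ℂ) * (τ:ℂ)^(s-1) * ((x : ℝ):ℂ)‖
        = Real.exp (μ*τ) * τ^(s.re-1) * |x| := by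
    intro τ hτ x
    rw [norm_mul, norm_mul, Complex.norm_exp,
      Complex.norm_cpow_eq_rpow_re_of_pos hτ, Complex.norm_real, Real.norm_eq_abs]
    simp [Complex.ofReal_re, Complex.sub_re, Complex.one_re]
  -- pointwise bound on the remainder
  have hptw : ∀ τ ∈ Set.Ioi (0:ℝ), ‖Rf τ‖ ≤ E * Real.exp (μ/2 * τ) := by
    intro τ hτ
    rw [Set.mem_Ioi] at hτ
    rw [hRfdef]
    simp only []
    rw [hnorm τ hτ _]
    have hexp2 : (0:ℝ) < Real.exp (μ/2 * τ) := Real.exp_pos _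
    rcases le_or_gt τ 1 with hle | hgt
    · have h1 : |K τ - A/(4*π*τ) - c₀| ≤ CK * Real.exp (-b/τ) := hK τ hτ hle
      have h2 : τ ^ (s.re - 1) ≤ 1 := Real.rpow_le_one hτ.le hle (by linarith)
      have h3 : Real.exp (μ*τ) * Real.exp (-b/τ)
          ≤ Real.exp (-(2*Real.sqrt (b*(-μ)/2))) * Real.exp (μ/2*τ) := by
        rw [← Real.exp_add, ← Real.exp_add]
        apply Real.exp_le_exp.2
        have amgm := myAMGM (x := (-μ)/2*τ) (y := b/τ) (by positivity) (by positivity)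
        have hxy : ((-μ)/2*τ) * (b/τ) = b*(-μ)/2 := by field_simp
        rw [hxy] at amgm
        have hhalf : μ * τ = 2 * (μ/2 * τ) := by ring
        have hbt : -b/τ = -(b/τ) := by ring
        rw [hbt]
        linarith [amgm, hhalf]
      calc Real.exp (μ*τ) * τ^(s.re-1) * |K τ - A/(4*π*τ) - c₀|
          ≤ Real.exp (μ*τ) * 1 * (CK * Real.exp (-b/τ)) :=
            mul_le_mul (mul_le_mul_of_nonneg_left h2 (Real.exp_pos _).le) h1
              (abs_nonneg _) (by positivity)
        _ = CK * (Real.exp (μ*τ) * Real.exp (-b/τ)) := by ring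
        _ ≤ CK * (Real.exp (-(2*Real.sqrt (b*(-μ)/2))) * Real.exp (μ/2*τ)) := by
            exact mul_le_mul_of_nonneg_left h3 hCK
        _ ≤ E * Real.exp (μ/2*τ) := by
            rw [hEdef]
            have : 0 ≤ M * Real.exp (μ/2+R₀) := mul_nonneg hM (Real.exp_pos _).le
            nlinarith
    · have hA4 : |A|/(4*π*τ) ≤ |A|/(4*π) := by
        apply div_le_div_of_nonneg_left (abs_nonneg A) (by positivity)
        nlinarith
      have hM1 : |K τ - A/(4*π*τ) - c₀| ≤ M := by
        have h0 : K τ ≤ K 1 := hKanti 1 τ one_pos hgt.le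
        have h0' : 0 ≤ K τ := hKnonneg τ
        have habs : |A/(4*π*τ)| = |A|/(4*π*τ) := by
          rw [abs_div]
          congr 1
          rw [abs_of_pos (by positivity : (0:ℝ) < 4*π*τ)]
        calc |K τ - A/(4*π*τ) - c₀| ≤ |K τ - A/(4*π*τ)| + |c₀| := abs_sub _ _
          _ ≤ |K τ| + |A/(4*π*τ)| + |c₀| :=
              add_le_add_left (abs_sub (K τ) (A/(4*π*τ))) _
          _ ≤ M := by
              rw [hMdef, habs, _root_.abs_of_nonneg h0']
              linarith
      have h2 : τ ^ (s.re-1) ≤ Real.exp (R₀*τ) := by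
        have e1 : τ ^ (s.re-1) ≤ τ ^ R₀ :=
          Real.rpow_le_rpow_of_exponent_le hgt.le (by linarith [hsR s hsS])
        have e2 : τ ^ R₀ = Real.exp (Real.log τ * R₀) :=
          Real.rpow_def_of_pos hτ _
        have e3 : Real.log τ * R₀ ≤ τ * R₀ := by
          have hlog : Real.log τ ≤ τ := by
            have := Real.log_le_sub_one_of_pos hτ
            linarith
          exact mul_le_mul_of_nonneg_right hlog hR₀
        rw [e2] at e1
        calc τ ^ (s.re-1) ≤ Real.exp (Real.log τ * R₀) := e1
          _ ≤ Real.exp (τ * R₀) := Real.exp_le_exp.2 e3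
          _ = Real.exp (R₀*τ) := by rw [mul_comm]
      have h3 : Real.exp (μ*τ) * Real.exp (R₀*τ) ≤ Real.exp (μ/2+R₀) * Real.exp (μ/2*τ) := by
        rw [← Real.exp_add, ← Real.exp_add]
        apply Real.exp_le_exp.2
        have hkey : 0 ≤ (-(μ/2+R₀)) * (τ-1) :=
          mul_nonneg (by linarith) (by linarith)
        nlinarith [hkey]
      calc Real.exp (μ*τ) * τ^(s.re-1) * |K τ - A/(4*π*τ) - c₀|
          ≤ Real.exp (μ*τ) * Real.exp (R₀*τ) * M :=
            mul_le_mul (mul_le_mul_of_nonneg_left h2 (Real.exp_pos _).le) hM1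
              (abs_nonneg _) (by positivity)
        _ ≤ (Real.exp (μ/2+R₀) * Real.exp (μ/2*τ)) * M :=
            mul_le_mul_of_nonneg_right h3 hM
        _ ≤ E * Real.exp (μ/2*τ) := by
            rw [hEdef]
            have : 0 ≤ CK * Real.exp (-(2 * Real.sqrt (b*(-μ)/2))) :=
              mul_nonneg hCK (Real.exp_pos _).le
            nlinarith
  -- integrability
  have hintg : IntegrableOn (fun τ:ℝ => E * Real.exp (μ/2 * τ)) (Set.Ioi 0) := by
    have h : IntegrableOn (fun τ:ℝ => Real.exp (-(-(μ/2)) * τ)) (Set.Ioi 0) :=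
      exp_neg_integrableOn_Ioi 0 (by linarith)
    have h' : IntegrableOn (fun τ:ℝ => Real.exp (μ/2 * τ)) (Set.Ioi 0) := by
      refine h.congr_fun (fun x _ => by norm_num) measurableSet_Ioi
    exact h'.const_mul E
  have hae : ∀ᵐ τ ∂(volume.restrict (Set.Ioi (0:ℝ))), ‖Rf τ‖ ≤ E * Real.exp (μ/2 * τ) :=
    (ae_restrict_iff' measurableSet_Ioi).2 (Filter.Eventually.of_forall hptw)
  have hmeasK : AEMeasurable K (volume.restrict (Set.Ioi (0:ℝ))) :=
    aemeasurable_restrict_of_antitoneOn measurableSet_Ioi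
      (fun x hx y _ hxy => hKanti x y hx hxy)
  have hcont : ContinuousOn (fun τ:ℝ => Complex.exp ((μ*τ:ℝ):ℂ) * (τ:ℂ)^(s-1)) (Set.Ioi 0) := by
    refine ContinuousOn.mul ?_ ?_
    · exact (Complex.continuous_exp.comp
        (Complex.continuous_ofReal.comp (continuous_const.mul continuous_id))).continuousOn
    · exact ContinuousOn.cpow_const Complex.continuous_ofReal.continuousOn
        (fun a ha => by simpa using (Set.mem_Ioi.mp ha))
  have hmeasmid : Measurable (fun τ:ℝ => A/(4*π*τ)) := by
    apply Measurable.div measurable_const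
    exact (measurable_const.mul measurable_id)
  have hmeasRf : AEStronglyMeasurable Rf (volume.restrict (Set.Ioi (0:ℝ))) := by
    apply AEStronglyMeasurable.mul (hcont.aestronglyMeasurable measurableSet_Ioi)
    apply AEMeasurable.aestronglyMeasurable
    apply Complex.measurable_ofReal.comp_aemeasurable
    exact (hmeasK.sub hmeasmid.aemeasurable).sub aemeasurable_const
  have hintRf : IntegrableOn Rf (Set.Ioi 0) := hintg.mono' hmeasRf hae
  have hsre : 0 < s.re := by linarith
  have hs1re : 0 < (s-1).re := by
    simp [Complex.sub_re, Complex.one_re]; linarith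
  have hintG1 : IntegrableOn (fun τ:ℝ => Complex.exp ((μ*τ:ℝ):ℂ) * (τ:ℂ)^(s-1-1)) (Set.Ioi 0) :=
    myIntOn hs1re hμ0
  have hintG2 : IntegrableOn (fun τ:ℝ => Complex.exp ((μ*τ:ℝ):ℂ) * (τ:ℂ)^(s-1)) (Set.Ioi 0) :=
    myIntOn hsre hμ0
  have hvalG1 : ∫ τ in Set.Ioi (0:ℝ), Complex.exp ((μ*τ:ℝ):ℂ) * (τ:ℂ)^(s-1-1)
      = (1/((-μ:ℝ):ℂ))^(s-1) * Complex.Gamma (s-1) := myIntVal hs1re hμ0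
  have hvalG2 : ∫ τ in Set.Ioi (0:ℝ), Complex.exp ((μ*τ:ℝ):ℂ) * (τ:ℂ)^(s-1)
      = (1/((-μ:ℝ):ℂ))^s * Complex.Gamma s := myIntVal hsre hμ0
  -- decomposition
  have hdecomp : ∀ τ ∈ Set.Ioi (0:ℝ),
      Complex.exp ((μ*τ:ℝ):ℂ) * (τ:ℂ)^(s-1) * ((K τ : ℝ):ℂ)
        = ((A/(4*π) : ℝ):ℂ) * (Complex.exp ((μ*τ:ℝ):ℂ) * (τ:ℂ)^(s-1-1))
          + ((c₀:ℝ):ℂ) * (Complex.exp ((μ*τ:ℝ):ℂ) * (τ:ℂ)^(s-1)) + Rf τ := by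
    intro τ hτ
    rw [Set.mem_Ioi] at hτ
    have hτ0 : (τ:ℂ) ≠ 0 := Complex.ofReal_ne_zero.2 hτ.ne'
    have hcp : (τ:ℂ)^(s-1-1) = (τ:ℂ)^(s-1) / (τ:ℂ) := by
      rw [Complex.cpow_sub _ _ hτ0, Complex.cpow_one]
    rw [hRfdef]
    simp only [hcp]
    have hπ0 : ((π:ℝ):ℂ) ≠ 0 := Complex.ofReal_ne_zero.2 hπ.ne'
    push_cast
    field_simp
    ring
  have hsplit : ∫ τ in Set.Ioi (0:ℝ),
        Complex.exp ((μ*τ:ℝ):ℂ) * (τ:ℂ)^(s-1) * ((K τ : ℝ):ℂ)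
      = ((A/(4*π) : ℝ):ℂ) * ((1/((-μ:ℝ):ℂ))^(s-1) * Complex.Gamma (s-1))
        + ((c₀:ℝ):ℂ) * ((1/((-μ:ℝ):ℂ))^s * Complex.Gamma s)
        + ∫ τ in Set.Ioi (0:ℝ), Rf τ := by
    have iA : IntegrableOn (fun τ:ℝ => ((A/(4*π) : ℝ):ℂ) *
        (Complex.exp ((μ*τ:ℝ):ℂ) * (τ:ℂ)^(s-1-1))) (Set.Ioi 0) := hintG1.const_mul _
    have iB : IntegrableOn (fun τ:ℝ => ((c₀:ℝ):ℂ) *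
        (Complex.exp ((μ*τ:ℝ):ℂ) * (τ:ℂ)^(s-1))) (Set.Ioi 0) := hintG2.const_mul _
    have iAB : IntegrableOn (fun τ:ℝ => ((A/(4*π) : ℝ):ℂ) *
        (Complex.exp ((μ*τ:ℝ):ℂ) * (τ:ℂ)^(s-1-1)) + ((c₀:ℝ):ℂ) *
        (Complex.exp ((μ*τ:ℝ):ℂ) * (τ:ℂ)^(s-1))) (Set.Ioi 0) := iA.add iB
    rw [MeasureTheory.setIntegral_congr_fun measurableSet_Ioi hdecomp]
    rw [MeasureTheory.integral_add iAB hintRf, MeasureTheory.integral_add iA iB,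
      MeasureTheory.integral_const_mul, MeasureTheory.integral_const_mul, hvalG1, hvalG2]
  -- main term identity
  have hΓs : Complex.Gamma s ≠ 0 := Complex.Gamma_ne_zero_of_re_pos hsre
  have hrC : ((-μ:ℝ):ℂ) ≠ 0 := Complex.ofReal_ne_zero.2 hr0.ne'
  have harg : ((-μ:ℝ):ℂ).arg ≠ π := by
    rw [Complex.arg_ofReal_of_nonneg hr0.le]
    exact Ne.symm Real.pi_ne_zero
  have hcp1 : ((-μ:ℝ):ℂ)^(s-1) ≠ 0 := by
    intro hzero
    rw [Complex.cpow_eq_zero_iff] at hzero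
    exact hrC hzero.1
  have hcp2 : ((-μ:ℝ):ℂ)^s ≠ 0 := by
    intro hzero
    rw [Complex.cpow_eq_zero_iff] at hzero
    exact hrC hzero.1
  have hπ0 : ((π:ℝ):ℂ) ≠ 0 := Complex.ofReal_ne_zero.2 hπ.ne'
  have hmain : (Complex.Gamma s)⁻¹ *
        (((A/(4*π) : ℝ):ℂ) * ((1/((-μ:ℝ):ℂ))^(s-1) * Complex.Gamma (s-1))
          + ((c₀:ℝ):ℂ) * ((1/((-μ:ℝ):ℂ))^s * Complex.Gamma s))
      = (A:ℂ) * Complex.Gamma (s-1) / (4*(π:ℂ)*Complex.Gamma s * ((-μ:ℝ):ℂ)^(s-1))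
        + (c₀:ℂ) * ((-μ:ℝ):ℂ)^(-s) := by
    have hcp1' : (-(μ:ℂ))^(s-1) ≠ 0 := by
      rw [show (-(μ:ℂ)) = ((-μ:ℝ):ℂ) by push_cast; ring]
      exact hcp1
    have hcp2' : (-(μ:ℂ))^s ≠ 0 := by
      rw [show (-(μ:ℂ)) = ((-μ:ℝ):ℂ) by push_cast; ring]
      exact hcp2
    rw [one_div, Complex.inv_cpow _ _ harg, Complex.inv_cpow _ _ harg, Complex.cpow_neg]
    push_cast
    field_simp [hΓs, hcp1', hcp2', hπ0]
  have heq : (Complex.Gamma s)⁻¹ *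
        (∫ τ in Set.Ioi (0:ℝ), Complex.exp ((μ*τ:ℝ):ℂ) * (τ:ℂ)^(s-1) * ((K τ : ℝ):ℂ))
        - ((A:ℂ) * Complex.Gamma (s-1) / (4*(π:ℂ)*Complex.Gamma s * ((-μ:ℝ):ℂ)^(s-1))
          + (c₀:ℂ) * ((-μ:ℝ):ℂ)^(-s))
      = (Complex.Gamma s)⁻¹ * ∫ τ in Set.Ioi (0:ℝ), Rf τ := by
    rw [hsplit, ← hmain]
    ring
  -- final estimate
  have hbase : |μ| ^ (-(N:ℝ)) = ((-μ)^N)⁻¹ := by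
    rw [abs_of_neg hμ0, ← Real.rpow_natCast (-μ) N, ← Real.rpow_neg hr0.le]
  have hpowpos : (0:ℝ) < (-μ)^N := pow_pos hr0 N
  have hIval : ∫ τ in Set.Ioi (0:ℝ), Real.exp (μ/2 * τ) = 2/(-μ) := by
    have h := integral_exp_neg_mul_rpow (p := 1) (b := -μ/2) one_pos (by linarith)
    have hfun : (fun x:ℝ => Real.exp (-(-μ/2) * x ^ (1:ℝ))) = fun x:ℝ => Real.exp (μ/2 * x) := by
      funext x
      rw [Real.rpow_one]
      ring_nf
    rw [hfun] at h
    rw [h]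
    rw [show (-1/1 : ℝ) = -1 by norm_num, Real.rpow_neg_one]
    rw [show (1/1 + 1 : ℝ) = 2 by norm_num,
      show Real.Gamma 2 = 1 by
        rw [show (2:ℝ) = 1+1 by norm_num, Real.Gamma_add_one one_ne_zero, Real.Gamma_one]; norm_num]
    field_simp [hμ0.ne]
  have hIR : ‖∫ τ in Set.Ioi (0:ℝ), Rf τ‖ ≤ E * (2 / (-μ)) := by
    calc ‖∫ τ in Set.Ioi (0:ℝ), Rf τ‖ ≤ ∫ τ in Set.Ioi (0:ℝ), E * Real.exp (μ/2*τ) :=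
          MeasureTheory.norm_integral_le_of_norm_le hintg hae
      _ = E * (2/(-μ)) := by rw [MeasureTheory.integral_const_mul, hIval]
  -- bound E
  have he1 : Real.exp (-(2 * Real.sqrt (b*(-μ)/2)))
      ≤ (Nat.factorial (2*N) : ℝ)/(2*b)^N / (-μ)^N := by
    have hy : 0 ≤ 2 * Real.sqrt (b*(-μ)/2) := by positivity
    have h := myExpNegLe (2 * Real.sqrt (b*(-μ)/2)) hy (2*N)
    have hsq : (2 * Real.sqrt (b*(-μ)/2))^2 = 2*b*(-μ) := by
      have : Real.sqrt (b*(-μ)/2) ^ 2 = b*(-μ)/2 := Real.sq_sqrt (by positivity)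
      nlinarith [this]
    have hpow : (2 * Real.sqrt (b*(-μ)/2))^(2*N) = (2*b)^N * (-μ)^N := by
      rw [pow_mul, hsq, ← mul_pow]
    rw [hpow] at h
    have hX : (0:ℝ) < (2*b)^N * (-μ)^N := by positivity
    rw [div_div, le_div_iff₀ hX, mul_comm]
    exact h
  have he2 : Real.exp (μ/2 + R₀) ≤ Real.exp R₀ * ((Nat.factorial N : ℝ) * 2^N) / (-μ)^N := by
    have h := myExpNegLe ((-μ)/2) (by linarith) N
    have hdp : ((-μ)/2 : ℝ)^N = (-μ)^N / 2^N := div_pow _ _ _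
    rw [hdp] at h
    have h2N : (0:ℝ) < 2^N := by positivity
    have h2 : Real.exp (-((-μ)/2)) ≤ (Nat.factorial N : ℝ) * 2^N / (-μ)^N := by
      rw [div_mul_eq_mul_div, div_le_iff₀ h2N] at h
      rw [le_div_iff₀ hpowpos, mul_comm]
      exact h
    calc Real.exp (μ/2+R₀) = Real.exp R₀ * Real.exp (-((-μ)/2)) := by
          rw [← Real.exp_add]; ring_nf
      _ ≤ Real.exp R₀ * ((Nat.factorial N : ℝ) * 2^N / (-μ)^N) :=
          mul_le_mul_of_nonneg_left h2 (Real.exp_pos _).le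
      _ = Real.exp R₀ * ((Nat.factorial N : ℝ) * 2^N) / (-μ)^N := by ring
  have hED : E ≤ D / (-μ)^N := by
    have t1 : CK * Real.exp (-(2 * Real.sqrt (b*(-μ)/2)))
        ≤ CK * ((Nat.factorial (2*N) : ℝ)/(2*b)^N) / (-μ)^N := by
      calc CK * Real.exp (-(2 * Real.sqrt (b*(-μ)/2)))
          ≤ CK * ((Nat.factorial (2*N) : ℝ)/(2*b)^N / (-μ)^N) :=
            mul_le_mul_of_nonneg_left he1 hCK
        _ = CK * ((Nat.factorial (2*N) : ℝ)/(2*b)^N) / (-μ)^N := by ring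
    have t2 : M * Real.exp (μ/2 + R₀)
        ≤ M * Real.exp R₀ * ((Nat.factorial N : ℝ) * 2^N) / (-μ)^N := by
      calc M * Real.exp (μ/2+R₀) ≤ M * (Real.exp R₀ * ((Nat.factorial N:ℝ) * 2^N) / (-μ)^N) :=
            mul_le_mul_of_nonneg_left he2 hM
        _ = M * Real.exp R₀ * ((Nat.factorial N:ℝ) * 2^N) / (-μ)^N := by ring
    rw [hEdef, hDdef, add_div]
    exact add_le_add t1 t2
  rw [heq, hbase, norm_mul]
  calc ‖(Complex.Gamma s)⁻¹‖ * ‖∫ τ in Set.Ioi (0:ℝ), Rf τ‖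
      ≤ G₀ * (E * (2/(-μ))) :=
        mul_le_mul (hGb s hsS) hIR (norm_nonneg _) hG₀
    _ ≤ 2 * G₀ * D * ((-μ)^N)⁻¹ := by
        have h21 : 2/(-μ) ≤ 1 := by rw [div_le_one hr0]; linarith
        have hDN : 0 ≤ D / (-μ)^N := div_nonneg hD hpowpos.le
        have step : E * (2/(-μ)) ≤ D/(-μ)^N := by
          calc E * (2/(-μ)) ≤ (D/(-μ)^N) * 1 :=
                mul_le_mul hED h21 (div_nonneg (by norm_num) hr0.le) hDN
            _ = D/(-μ)^N := mul_one _
        calc G₀ * (E * (2/(-μ))) ≤ G₀ * (D/(-μ)^N) := mul_le_mul_of_nonneg_left step hG₀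
          _ ≤ 2*G₀*D * ((-μ)^N)⁻¹ := by
              rw [div_eq_mul_inv]
              nlinarith [mul_nonneg (mul_nonneg hG₀ hD) (inv_nonneg.2 hpowpos.le)]
end
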